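/- Let X be a finite connected bipartite multigraph with deg(x) ≥ 3 for all x. Then for all vertices x, y with d(x,y) ≡ δ mod 2 (δ ∈ {0,1}), lim_{n→∞} q^(2n+δ)(x,y) = 2·deg(y)/|E(X)|. -/

import Mathlib

open scoped BigOperators
open Filter

/-- A multigraph given by its set of *oriented* edges. Each oriented edge `e`
has an initial vertex `tail e = e⁻`, a terminal vertex `head e = e⁺`, and a
reversal `bar e = ě` with `ě ≠ e` (loops are counted twice). Local finiteness
is built in. -/
structure Multigraph where
  V : Type
  E : Type
  tail : E → V
  head : E → V
  bar : E → E
  bar_bar : ∀ e, bar (bar e) = e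
  bar_ne : ∀ e, bar e ≠ e
  head_bar : ∀ e, head (bar e) = tail e
  locFin : ∀ x, {e | tail e = x}.Finite

namespace Multigraph
variable (G : Multigraph)

/-- The degree of a vertex: the number of oriented edges emanating from it. -/
noncomputable def deg (x : G.V) : ℕ := (G.locFin x).toFinset.card

/-- `e → f`: `f` may follow `e` in a non-backtracking walk. -/
def Step (e f : G.E) : Prop := G.tail f = G.head e ∧ f ≠ G.bar e

/-- `e ⇒ f`: there is a non-backtracking walk from `e` to `f`. -/
def Reach : G.E → G.E → Prop := Relation.ReflTransGen G.Step

/-- One-step transition probabilities of the edge non-backtracking random walk. -/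
noncomputable def q (e f : G.E) : ℝ :=
  open Classical in
  if G.Step e f then 1 / ((G.deg (G.head e) : ℝ) - 1) else 0

/-- `n`-step transition probabilities `q_E^(n)` of the edge NBRW. -/
noncomputable def qn (G : Multigraph) : ℕ → G.E → G.E → ℝ
  | 0, e, f => open Classical in if e = f then 1 else 0
  | n + 1, e, f => ∑' g : G.E, qn G n e g * G.q g f

/-- Vertex NBRW transition probabilities:
`q^(n)(x,y) = (1/deg x) ∑_{e⁺=x, f⁺=y} q_E^(n)(e,f)`. -/
noncomputable def qv (n : ℕ) (x y : G.V) : ℝ :=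
  (1 / (G.deg x : ℝ)) *
    ∑' (e : {e : G.E // G.head e = x}) (f : {f : G.E // G.head f = y}),
      G.qn n e.1 f.1

def Adj (x y : G.V) : Prop := ∃ e : G.E, G.tail e = x ∧ G.head e = y

def Connected : Prop := ∀ x y : G.V, Relation.ReflTransGen G.Adj x y

/-- There is a walk of length `n` from `x` to `y`. -/
def WalkLen (G : Multigraph) : ℕ → G.V → G.V → Prop
  | 0, x, y => x = y
  | n + 1, x, y => ∃ z, G.Adj x z ∧ WalkLen G n z y

/-- Graph distance. -/
noncomputable def dist (x y : G.V) : ℕ := sInf {n | G.WalkLen n x y}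

/-- A cycle: a nonempty list of distinct oriented edges, with distinct initial
vertices, such that consecutive edges (cyclically) form non-backtracking steps. -/
def IsCycle (l : List G.E) : Prop :=
  l ≠ [] ∧ l.Nodup ∧ (l.map G.tail).Nodup ∧ List.Chain' G.Step (l ++ l.take 1)

/-- Small cycles are dense: some radius `R` works for every ball. -/
def SmallCyclesDense : Prop :=
  ∃ R : ℕ, ∀ x : G.V, ∃ l : List G.E, G.IsCycle l ∧ ∀ e ∈ l, G.dist x (G.tail e) ≤ R

/-- `X` is a (finite) cycle graph. -/
def IsCycleGraph : Prop := (Set.univ : Set G.V).Finite ∧ ∀ x, G.deg x = 2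

def Bipartite : Prop := ∃ c : G.V → Bool, ∀ e : G.E, c (G.tail e) ≠ c (G.head e)

end Multigraph
set_option linter.unusedSectionVars false
namespace Multigraph

open Finset

variable {G : Multigraph}

lemma tail_bar (e : G.E) : G.tail (G.bar e) = G.head e := by
  conv_rhs => rw [← G.bar_bar e]
  rw [G.head_bar]

lemma step_bar {e f : G.E} (h : G.Step e f) : G.Step (G.bar f) (G.bar e) := by
  obtain ⟨h1, h2⟩ := h
  refine ⟨?_, ?_⟩
  · rw [tail_bar, G.head_bar, h1]
  · intro hc
    apply h2
    rw [← G.bar_bar f, hc, G.bar_bar]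

section FinE
variable [Fintype G.E]

open Classical

lemma deg_eq (x : G.V) :
    G.deg x = (Finset.univ.filter (fun e => G.tail e = x)).card := by
  have h : (G.locFin x).toFinset = Finset.univ.filter (fun e => G.tail e = x) := by
    ext e; simp [Set.Finite.mem_toFinset]
  rw [deg, h]

lemma step_filter (e : G.E) :
    Finset.univ.filter (fun f => G.Step e f)
      = (Finset.univ.filter (fun f => G.tail f = G.head e)).erase (G.bar e) := by
  ext f
  rw [Finset.mem_filter]
  simp only [mem_filter, mem_erase, mem_univ, true_and, Step]
  tauto

lemma card_step_filter (e : G.E) :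
    (Finset.univ.filter (fun f => G.Step e f)).card = G.deg (G.head e) - 1 := by
  rw [step_filter, Finset.card_erase_of_mem, deg_eq]
  simp [tail_bar]

lemma q_eq_zero {e f : G.E} (h : ¬ G.Step e f) : G.q e f = 0 := if_neg h

section Deg
variable (hdeg : ∀ x, 3 ≤ G.deg x)
include hdeg

lemma degR_pos (x : G.V) : 0 < (G.deg x : ℝ) - 1 := by
  have := hdeg x
  have : (3 : ℝ) ≤ (G.deg x : ℝ) := by exact_mod_cast this
  linarith

lemma q_nonneg (e f : G.E) : 0 ≤ G.q e f := by
  unfold q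
  split
  · have := degR_pos hdeg (G.head e); positivity
  · exact le_refl 0

lemma q_pos {e f : G.E} (h : G.Step e f) : 0 < G.q e f := by
  unfold q
  rw [if_pos h]
  have := degR_pos hdeg (G.head e); positivity

omit hdeg in
lemma step_of_q_pos {e f : G.E} (h : 0 < G.q e f) : G.Step e f := by
  by_contra hc
  rw [q_eq_zero hc] at h
  exact lt_irrefl 0 h

lemma q_rowsum (e : G.E) : ∑ f, G.q e f = 1 := by
  have h1 : ∀ f, G.q e f = if G.Step e f then 1 / ((G.deg (G.head e) : ℝ) - 1) else 0 :=
    fun f => rfl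
  calc ∑ f, G.q e f
      = ∑ f ∈ Finset.univ.filter (fun f => G.Step e f),
          (1 / ((G.deg (G.head e) : ℝ) - 1)) := by
        rw [Finset.sum_filter]; exact Finset.sum_congr rfl (fun f _ => h1 f)
    _ = ((G.deg (G.head e) - 1 : ℕ) : ℝ) * (1 / ((G.deg (G.head e) : ℝ) - 1)) := by
        rw [Finset.sum_const, card_step_filter, nsmul_eq_mul]
    _ = 1 := by
        have h3 := hdeg (G.head e)
        have : ((G.deg (G.head e) - 1 : ℕ) : ℝ) = (G.deg (G.head e) : ℝ) - 1 := by
          have : 1 ≤ G.deg (G.head e) := by omega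
          push_cast [this]; ring
        rw [this, mul_one_div, div_self (ne_of_gt (degR_pos hdeg _))]

omit hdeg in
lemma card_instep_filter (f : G.E) :
    (Finset.univ.filter (fun g => G.Step g f)).card = G.deg (G.tail f) - 1 := by
  have himg : Finset.univ.filter (fun g => G.Step g f)
      = ((Finset.univ.filter (fun g => G.tail g = G.tail f)).erase f).image G.bar := by
    ext g
    rw [Finset.mem_filter]
    simp only [mem_filter, mem_image, mem_erase, mem_univ, true_and, Step]
    constructor
    · rintro ⟨h1, h2⟩
      refine ⟨G.bar g, ⟨?_, ?_⟩, G.bar_bar g⟩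
      · intro hc; exact h2 (by rw [← hc])
      · rw [tail_bar, h1]
    · rintro ⟨h, ⟨hne, ht⟩, rfl⟩
      refine ⟨?_, ?_⟩
      · rw [G.head_bar, ht]
      · intro hc
        exact hne (by rw [← G.bar_bar h, hc, G.bar_bar])
  rw [himg, Finset.card_image_of_injective _ (fun a b hab => by
      rw [← G.bar_bar a, hab, G.bar_bar]),
    Finset.card_erase_of_mem (by simp), deg_eq]

lemma q_colsum (f : G.E) : ∑ g, G.q g f = 1 := by
  have h1 : ∀ g, G.Step g f → G.q g f = 1 / ((G.deg (G.tail f) : ℝ) - 1) := by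
    intro g hg
    unfold q
    rw [if_pos hg, hg.1]
  calc ∑ g, G.q g f
      = ∑ g ∈ Finset.univ.filter (fun g => G.Step g f), G.q g f := by
        rw [Finset.sum_filter]
        refine Finset.sum_congr rfl (fun g _ => ?_)
        split
        · rfl
        · exact if_neg (by assumption)
    _ = ∑ g ∈ Finset.univ.filter (fun g => G.Step g f),
          (1 / ((G.deg (G.tail f) : ℝ) - 1)) :=
        Finset.sum_congr rfl (fun g hg => h1 g (by simpa using hg))
    _ = ((G.deg (G.tail f) - 1 : ℕ) : ℝ) * (1 / ((G.deg (G.tail f) : ℝ) - 1)) := by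
        rw [Finset.sum_const, card_instep_filter, nsmul_eq_mul]
    _ = 1 := by
        have h3 := hdeg (G.tail f)
        have : ((G.deg (G.tail f) - 1 : ℕ) : ℝ) = (G.deg (G.tail f) : ℝ) - 1 := by
          have : 1 ≤ G.deg (G.tail f) := by omega
          push_cast [this]; ring
        rw [this, mul_one_div, div_self (ne_of_gt (degR_pos hdeg _))]

end Deg
end FinE
end Multigraph
namespace Multigraph
open Finset
variable {G : Multigraph} [Fintype G.E]
open Classical

lemma qn_zero (e f : G.E) : G.qn 0 e f = if e = f then 1 else 0 := rfl

lemma qn_succ (n : ℕ) (e f : G.E) :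
    G.qn (n+1) e f = ∑ g, G.qn n e g * G.q g f := by
  rw [qn, tsum_fintype]

section Deg
variable (hdeg : ∀ x, 3 ≤ G.deg x)
include hdeg

lemma qn_nonneg (n : ℕ) (e f : G.E) : 0 ≤ G.qn n e f := by
  induction n generalizing f with
  | zero => rw [qn_zero]; split <;> norm_num
  | succ n ih =>
      rw [qn_succ]
      exact Finset.sum_nonneg (fun g _ => mul_nonneg (ih g) (q_nonneg hdeg g f))

lemma qn_chapman (m n : ℕ) (e f : G.E) :
    G.qn (m + n) e f = ∑ g, G.qn m e g * G.qn n g f := by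
  induction n generalizing f with
  | zero =>
      simp [qn_zero, mul_ite, Finset.sum_ite_eq']
  | succ n ih =>
      rw [show m + (n+1) = (m + n) + 1 by ring, qn_succ]
      have : ∀ g, G.qn (m+n) e g * G.q g f
          = ∑ h, G.qn m e h * (G.qn n h g * G.q g f) := by
        intro g
        rw [ih, Finset.sum_mul]
        exact Finset.sum_congr rfl (fun h _ => by ring)
      rw [Finset.sum_congr rfl (fun g _ => this g), Finset.sum_comm]
      refine Finset.sum_congr rfl (fun h _ => ?_)
      rw [qn_succ, Finset.mul_sum]

omit hdeg in
lemma qn_one (e f : G.E) : G.qn 1 e f = G.q e f := by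
  rw [qn_succ]
  simp [qn_zero, Finset.sum_ite_eq]

lemma qn_succ_left (n : ℕ) (e f : G.E) :
    G.qn (n+1) e f = ∑ g, G.q e g * G.qn n g f := by
  rw [show n + 1 = 1 + n by ring, qn_chapman hdeg]
  exact Finset.sum_congr rfl (fun g _ => by rw [qn_one])

lemma qn_pos_trans {m n : ℕ} {e g f : G.E}
    (h1 : 0 < G.qn m e g) (h2 : 0 < G.qn n g f) : 0 < G.qn (m + n) e f := by
  rw [qn_chapman hdeg]
  have hterm : 0 < G.qn m e g * G.qn n g f := mul_pos h1 h2
  refine lt_of_lt_of_le hterm ?_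
  exact Finset.single_le_sum
    (fun h _ => mul_nonneg (qn_nonneg hdeg m e h) (qn_nonneg hdeg n h f))
    (Finset.mem_univ g)

lemma qn_pos_elim {n : ℕ} {e f : G.E} (h : 0 < G.qn (n+1) e f) :
    ∃ g, 0 < G.q e g ∧ 0 < G.qn n g f := by
  rw [qn_succ_left hdeg] at h
  by_contra hc
  push_neg at hc
  have : ∑ g, G.q e g * G.qn n g f ≤ 0 := by
    refine Finset.sum_nonpos (fun g _ => ?_)
    rcases lt_or_ge 0 (G.q e g) with hq | hq
    · have := hc g hq
      have h2 := qn_nonneg hdeg n g f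
      have : G.qn n g f = 0 := le_antisymm this h2
      rw [this, mul_zero]
    · have : G.q e g = 0 := le_antisymm hq (q_nonneg hdeg e g)
      rw [this, zero_mul]
  linarith

lemma qn_pos_elim' {n : ℕ} {e f : G.E} (h : 0 < G.qn (n+1) e f) :
    ∃ g, 0 < G.qn n e g ∧ 0 < G.q g f := by
  rw [qn_succ] at h
  by_contra hc
  push_neg at hc
  have : ∑ g, G.qn n e g * G.q g f ≤ 0 := by
    refine Finset.sum_nonpos (fun g _ => ?_)
    rcases lt_or_ge 0 (G.qn n e g) with hq | hq
    · have : G.q g f = 0 :=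
        le_antisymm (hc g hq) (q_nonneg hdeg g f)
      rw [this, mul_zero]
    · exact mul_nonpos_of_nonpos_of_nonneg hq (q_nonneg hdeg g f)
  linarith

lemma qn_rowsum (n : ℕ) (e : G.E) : ∑ f, G.qn n e f = 1 := by
  induction n generalizing e with
  | zero => simp [qn_zero, Finset.sum_ite_eq]
  | succ n ih =>
      rw [Finset.sum_congr rfl (fun f (_ : f ∈ Finset.univ) => qn_succ_left hdeg n e f),
        Finset.sum_comm]
      calc ∑ g, ∑ f, G.q e g * G.qn n g f
          = ∑ g, G.q e g * ∑ f, G.qn n g f := by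
            exact Finset.sum_congr rfl (fun g _ => by rw [Finset.mul_sum])
        _ = ∑ g, G.q e g := by
            exact Finset.sum_congr rfl (fun g _ => by rw [ih, mul_one])
        _ = 1 := q_rowsum hdeg e

lemma qn_colsum (n : ℕ) (f : G.E) : ∑ e, G.qn n e f = 1 := by
  induction n generalizing f with
  | zero => simp [qn_zero, Finset.sum_ite_eq']
  | succ n ih =>
      rw [Finset.sum_congr rfl (fun e (_ : e ∈ Finset.univ) => qn_succ n e f),
        Finset.sum_comm]
      calc ∑ g, ∑ e, G.qn n e g * G.q g f
          = ∑ g, (∑ e, G.qn n e g) * G.q g f := by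
            exact Finset.sum_congr rfl (fun g _ => by rw [Finset.sum_mul])
        _ = ∑ g, G.q g f := by
            exact Finset.sum_congr rfl (fun g _ => by rw [ih, one_mul])
        _ = 1 := q_colsum hdeg f

end Deg
end Multigraph
namespace Multigraph
open Finset
variable {G : Multigraph} [Fintype G.E]
open Classical

/-- Positive-probability reachability in the NBRW edge chain. -/
def NReach (G : Multigraph) [Fintype G.E] (e f : G.E) : Prop := ∃ n, 0 < G.qn n e f

section Deg
variable (hdeg : ∀ x, 3 ≤ G.deg x)
include hdeg

omit hdeg in
lemma nreach_refl (e : G.E) : G.NReach e e := ⟨0, by rw [qn_zero]; simp⟩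

lemma nreach_step {e f : G.E} (h : G.Step e f) : G.NReach e f :=
  ⟨1, by rw [qn_one]; exact q_pos hdeg h⟩

lemma nreach_trans {e g f : G.E} (h1 : G.NReach e g) (h2 : G.NReach g f) :
    G.NReach e f := by
  obtain ⟨m, hm⟩ := h1
  obtain ⟨n, hn⟩ := h2
  exact ⟨m + n, qn_pos_trans hdeg hm hn⟩

/-- Every edge has at least two distinct possible continuations. -/
lemma exists_two_steps (e : G.E) :
    ∃ f1 f2, G.Step e f1 ∧ G.Step e f2 ∧ f1 ≠ f2 := by
  have hc : 2 ≤ (Finset.univ.filter (fun f => G.Step e f)).card := by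
    rw [card_step_filter]
    have := hdeg (G.head e)
    omega
  obtain ⟨f1, f2, h1, h2, hne⟩ := Finset.one_lt_card_iff.mp hc
  exact ⟨f1, f2, (Finset.mem_filter.mp h1).2, (Finset.mem_filter.mp h2).2, hne⟩

/-- A step-forward-closed set of edges is also backward closed
(double stochasticity of the NBRW). -/
lemma closed_pred {A : Finset G.E} (hA : ∀ g ∈ A, ∀ h, G.Step g h → h ∈ A) :
    ∀ g h, G.Step g h → h ∈ A → g ∈ A := by
  have hq0 : ∀ g ∈ A, ∀ h, h ∉ A → G.q g h = 0 := by
    intro g hg h hh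
    by_contra hne
    have hpos : 0 < G.q g h := lt_of_le_of_ne (q_nonneg hdeg g h) (Ne.symm hne)
    exact hh (hA g hg h (step_of_q_pos hpos))
  have hrow : ∀ g ∈ A, ∑ h ∈ A, G.q g h = 1 := by
    intro g hg
    have hsplit := Finset.sum_add_sum_compl A (fun h => G.q g h)
    have hz : ∑ h ∈ Aᶜ, G.q g h = 0 :=
      Finset.sum_eq_zero (fun h hh => hq0 g hg h (Finset.mem_compl.mp hh))
    rw [hz, add_zero] at hsplit
    rw [hsplit, q_rowsum hdeg]
  have hcol : ∀ h, (∑ g ∈ A, G.q g h) + (∑ g ∈ Aᶜ, G.q g h) = 1 := by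
    intro h
    rw [Finset.sum_add_sum_compl A (fun g => G.q g h), q_colsum hdeg]
  have hAA : ∑ g ∈ A, ∑ h ∈ A, G.q g h = (A.card : ℝ) := by
    rw [Finset.sum_congr rfl hrow, Finset.sum_const, nsmul_eq_mul, mul_one]
  have hX : ∑ h ∈ A, ∑ g ∈ Aᶜ, G.q g h = 0 := by
    have h1 : ∑ h ∈ A, ((∑ g ∈ A, G.q g h) + (∑ g ∈ Aᶜ, G.q g h)) = (A.card : ℝ) := by
      rw [Finset.sum_congr rfl (fun h _ => hcol h), Finset.sum_const, nsmul_eq_mul,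
        mul_one]
    rw [Finset.sum_add_distrib] at h1
    rw [Finset.sum_comm] at h1
    rw [hAA] at h1
    linarith
  intro g h hgh hh
  by_contra hg
  have hterm : G.q g h = 0 := by
    have := (Finset.sum_eq_zero_iff_of_nonneg
      (fun h' _ => Finset.sum_nonneg (fun g' _ => q_nonneg hdeg g' h'))).mp hX h hh
    exact (Finset.sum_eq_zero_iff_of_nonneg
      (fun g' _ => q_nonneg hdeg g' h)).mp this g (Finset.mem_compl.mpr hg)
  have := q_pos hdeg hgh
  rw [hterm] at this
  exact lt_irrefl 0 this

/-- Backward closure of reach-sets. -/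
lemma nreach_pred {e g h : G.E} (hgh : G.Step g h) (hh : G.NReach e h) :
    G.NReach e g := by
  set A : Finset G.E := Finset.univ.filter (fun g' => G.NReach e g') with hAdef
  have hA : ∀ g' ∈ A, ∀ h', G.Step g' h' → h' ∈ A := by
    intro g' hg' h' hstep
    rw [hAdef, Finset.mem_filter] at *
    exact ⟨Finset.mem_univ _, nreach_trans hdeg hg'.2 (nreach_step hdeg hstep)⟩
  have := closed_pred hdeg hA g h hgh
    (by rw [hAdef, Finset.mem_filter]; exact ⟨Finset.mem_univ _, hh⟩)
  rw [hAdef, Finset.mem_filter] at this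
  exact this.2

/-- Every edge can be reversed by a non-backtracking walk. -/
lemma nreach_bar (e : G.E) : G.NReach e (G.bar e) := by
  obtain ⟨f1, f2, h1, h2, hne⟩ := exists_two_steps hdeg e
  -- Step (bar f1) f2
  have hb12 : G.Step (G.bar f1) f2 := by
    refine ⟨?_, ?_⟩
    · rw [G.head_bar, h2.1, h1.1]
    · rw [G.bar_bar]; exact hne.symm
  have hbf1 : G.NReach e (G.bar f1) :=
    nreach_pred hdeg hb12 (nreach_step hdeg h2)
  have hbe : G.Step (G.bar f1) (G.bar e) := by
    refine ⟨?_, ?_⟩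
    · rw [G.head_bar, tail_bar, h1.1]
    · rw [G.bar_bar]; exact fun hc => h1.2 hc.symm
  exact nreach_trans hdeg hbf1 (nreach_step hdeg hbe)

lemma nreach_of_head_tail {e f : G.E} (h : G.tail f = G.head e) : G.NReach e f := by
  by_cases hf : f = G.bar e
  · rw [hf]; exact nreach_bar hdeg e
  · exact nreach_step hdeg ⟨h, hf⟩

/-- Irreducibility: every edge reaches every edge. -/
lemma nreach_all (hconn : G.Connected) (e f : G.E) : G.NReach e f := by
  have key : ∀ x y, Relation.ReflTransGen G.Adj x y →
      ∀ e f : G.E, G.head e = x → G.tail f = y → G.NReach e f := by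
    intro x y hxy
    induction hxy with
    | refl =>
        intro e f he hf
        exact nreach_of_head_tail hdeg (by rw [hf, ← he])
    | tail hxz hadj ih =>
        rename_i z w _
        intro e f he hf
        obtain ⟨g, hg1, hg2⟩ := hadj
        have h1 : G.NReach e g := ih e g he hg1
        have h2 : G.NReach g f := nreach_of_head_tail hdeg (by rw [hf, ← hg2])
        exact nreach_trans hdeg h1 h2
  exact key (G.head e) (G.tail f) (hconn _ _) e f rfl rfl

/-- Parity of walks and the bipartite colouring. -/
lemma qn_parity {c : G.V → Bool} (hc : ∀ e : G.E, c (G.tail e) ≠ c (G.head e))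
    {n : ℕ} {e f : G.E} (h : 0 < G.qn n e f) :
    (c (G.tail f) = c (G.tail e)) ↔ Even n := by
  induction n generalizing e with
  | zero =>
      have : e = f := by
        by_contra hne
        rw [qn_zero, if_neg hne] at h
        exact lt_irrefl 0 h
      subst this
      simp
  | succ n ih =>
      obtain ⟨g, hg1, hg2⟩ := qn_pos_elim hdeg h
      have hstep : G.Step e g := step_of_q_pos hg1
      have hgc : c (G.tail g) ≠ c (G.tail e) := by
        rw [hstep.1]
        exact (hc e).symm
      have IH := ih hg2
      have key : (c (G.tail f) = c (G.tail e)) ↔ ¬ (c (G.tail f) = c (G.tail g)) := by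
        cases hce : c (G.tail e) <;> cases hcf : c (G.tail f) <;>
          cases hcg : c (G.tail g) <;> simp_all
      rw [key, IH, Nat.even_add_one]

end Deg
end Multigraph
namespace Multigraph
open Finset
variable {G : Multigraph} [Fintype G.E]
open Classical

section Deg
variable (hdeg : ∀ x, 3 ≤ G.deg x) (hconn : G.Connected)
include hdeg hconn

/-- Every edge is a continuation of an edge having two distinct continuations,
yielding the key relation `ρ v − ρ (bar v) ≡ 1`. Packaged: there exist closed
walks at `e0` of lengths `b` and `b+2`. -/
lemma exists_plus_two (e0 : G.E) :
    ∃ b : ℕ, 0 < G.qn b e0 e0 ∧ 0 < G.qn (b + 2) e0 e0 := by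
  set P : Set ℕ := {n | 0 < G.qn n e0 e0} with hP
  have hPadd : ∀ a ∈ P, ∀ b ∈ P, a + b ∈ P := fun a ha b hb => qn_pos_trans hdeg ha hb
  set T : AddSubgroup ℤ :=
    { carrier := {z | ∃ a ∈ P, ∃ b ∈ P, z = (a : ℤ) - b}
      zero_mem' := ⟨0, by rw [hP]; exact Set.mem_setOf.mpr (by rw [qn_zero]; simp),
        0, by rw [hP]; exact Set.mem_setOf.mpr (by rw [qn_zero]; simp), by ring⟩
      add_mem' := by
        rintro x y ⟨a, ha, b, hb, rfl⟩ ⟨c, hc, d, hd, rfl⟩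
        exact ⟨a + c, hPadd a ha c hc, b + d, hPadd b hb d hd, by push_cast; ring⟩
      neg_mem' := by
        rintro x ⟨a, ha, b, hb, rfl⟩
        exact ⟨b, hb, a, ha, by ring⟩ } with hT
  -- difference of two walk lengths between the same pair of edges lies in T
  have hdiff : ∀ (e f : G.E) (n1 n2 : ℕ),
      0 < G.qn n1 e f → 0 < G.qn n2 e f → ((n1 : ℤ) - n2) ∈ T := by
    intro e f n1 n2 h1 h2
    obtain ⟨s, hs⟩ := nreach_all hdeg hconn e0 e
    obtain ⟨t, ht⟩ := nreach_all hdeg hconn f e0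
    have m1 : s + n1 + t ∈ P := qn_pos_trans hdeg (qn_pos_trans hdeg hs h1) ht
    have m2 : s + n2 + t ∈ P := qn_pos_trans hdeg (qn_pos_trans hdeg hs h2) ht
    exact ⟨s + n1 + t, m1, s + n2 + t, m2, by push_cast; ring⟩
  -- a reference walk length to each edge
  have hrho : ∀ e : G.E, ∃ n, 0 < G.qn n e0 e := fun e => nreach_all hdeg hconn e0 e
  set ρ : G.E → ℕ := fun e => (hrho e).choose with hρdef
  have hρ : ∀ e, 0 < G.qn (ρ e) e0 e := fun e => (hrho e).choose_spec
  -- step relation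
  have t2 : ∀ {g h : G.E}, G.Step g h → ((ρ h : ℤ) - ρ g - 1) ∈ T := by
    intro g h hgh
    have hwalk : 0 < G.qn (ρ g + 1) e0 h :=
      qn_pos_trans hdeg (hρ g) (by rw [qn_one]; exact q_pos hdeg hgh)
    have := hdiff e0 h (ρ h) (ρ g + 1) (hρ h) hwalk
    have heq : ((ρ h : ℤ) - (ρ g + 1 : ℕ)) = (ρ h : ℤ) - ρ g - 1 := by push_cast; ring
    rwa [heq] at this
  -- ρ v − ρ (bar v) − 1 ∈ T for every edge v
  have t5 : ∀ v : G.E, ((ρ v : ℤ) - ρ (G.bar v) - 1) ∈ T := by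
    intro v
    -- find three distinct edges with tail = tail v
    have hcard : 3 ≤ (Finset.univ.filter (fun g => G.tail g = G.tail v)).card := by
      rw [← deg_eq]; exact hdeg _
    have hvmem : v ∈ Finset.univ.filter (fun g => G.tail g = G.tail v) := by simp
    have hcard2 : 2 ≤ ((Finset.univ.filter (fun g => G.tail g = G.tail v)).erase v).card := by
      rw [Finset.card_erase_of_mem hvmem]; omega
    obtain ⟨h, v2, hh, hv2, hne⟩ := Finset.one_lt_card_iff.mp hcard2
    have hh' := Finset.mem_erase.mp hh
    have hv2' := Finset.mem_erase.mp hv2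
    have hhtail : G.tail h = G.tail v := (Finset.mem_filter.mp hh'.2).2
    have hv2tail : G.tail v2 = G.tail v := (Finset.mem_filter.mp hv2'.2).2
    set u := G.bar h with hu
    have hsu_v : G.Step u v := ⟨by rw [G.head_bar, hhtail], by rw [hu, G.bar_bar]; exact fun hc => hh'.1 hc.symm⟩
    have hsu_v2 : G.Step u v2 := ⟨by rw [G.head_bar, hhtail, hv2tail], by rw [hu, G.bar_bar]; exact fun hc => hne (hc ▸ rfl)⟩
    have hsbv_v2 : G.Step (G.bar v) v2 :=
      ⟨by rw [G.head_bar, hv2tail], by rw [G.bar_bar]; exact hv2'.1⟩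
    have r1 := t2 hsu_v
    have r2 := t2 hsu_v2
    have r3 := t2 hsbv_v2
    have := T.add_mem (T.sub_mem r1 r2) r3
    have heq : ((ρ v : ℤ) - ρ u - 1) - ((ρ v2 : ℤ) - ρ u - 1) + ((ρ v2 : ℤ) - ρ (G.bar v) - 1)
        = (ρ v : ℤ) - ρ (G.bar v) - 1 := by ring
    rwa [heq] at this
  -- 2 ∈ T
  have h2T : (2 : ℤ) ∈ T := by
    obtain ⟨w, _, hw, _, _⟩ := exists_two_steps hdeg e0
    have A := t5 w
    have B := t5 e0
    have Cc := t2 hw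
    have Dd := t2 (step_bar hw)
    have := T.sub_mem (T.sub_mem (T.sub_mem A B) Cc) Dd
    have heq : ((ρ w : ℤ) - ρ (G.bar w) - 1) - ((ρ e0 : ℤ) - ρ (G.bar e0) - 1)
        - ((ρ w : ℤ) - ρ e0 - 1) - ((ρ (G.bar e0) : ℤ) - ρ (G.bar w) - 1) = 2 := by ring
    rwa [heq] at this
  obtain ⟨a, ha, b, hb, hab⟩ := h2T
  have : a = b + 2 := by omega
  exact ⟨b, hb, this ▸ ha⟩

end Deg

/-- Numerical semigroup lemma: if an additive set of naturals contains `0`,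
an even `b` and `b+2`, it contains every sufficiently large even number. -/
lemma semigroup_even {P : Set ℕ} (h0 : 0 ∈ P)
    (hadd : ∀ a ∈ P, ∀ b ∈ P, a + b ∈ P) {b : ℕ} (hbe : Even b)
    (hb : b ∈ P) (hb2 : b + 2 ∈ P) :
    ∀ n, Even n → (b + 2) * (b + 2) ≤ n → n ∈ P := by
  have hmul : ∀ k p, p ∈ P → k * p ∈ P := by
    intro k p hp
    induction k with
    | zero => simpa using h0
    | succ k ih => rw [Nat.succ_mul]; exact hadd _ ih _ hp
  have hcomb : ∀ i j, i * (b + 2) + j * b ∈ P :=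
    fun i j => hadd _ (hmul i _ hb2) _ (hmul j _ hb)
  intro n hn hge
  obtain ⟨N, hN⟩ := hn
  rcases Nat.eq_zero_or_pos b with hb0 | hbpos
  · subst hb0
    have : n = (N) * (0 + 2) + 0 * 0 := by omega
    rw [this]; exact hcomb N 0
  obtain ⟨B, hB⟩ := hbe
  have hBpos : 0 < B := by omega
  set i := N % B with hi
  set j := N / B - N % B with hj
  have hdm : B * (N / B) + N % B = N := Nat.div_add_mod N B
  have hlt : N % B < B := Nat.mod_lt _ hBpos
  have hBB : B * B ≤ N := by nlinarith [hge, hN, hB]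
  have hgeDiv : B ≤ N / B := (Nat.le_div_iff_mul_le hBpos).mpr hBB
  have hn_eq : n = i * (b + 2) + j * b := by
    have : j = N / B - N % B := hj
    -- n = 2N, b = 2B
    have hexp : i * (b + 2) + j * b = (i + j) * b + 2 * i := by ring
    rw [hexp]
    have hij : i + j = N / B := by omega
    rw [hij]
    calc n = N + N := hN
      _ = 2 * (B * (N / B) + N % B) := by omega
      _ = N / B * b + 2 * i := by rw [hB]; ring
  rw [hn_eq]
  exact hcomb i j

end Multigraph
namespace Multigraph
open Finset
variable {G : Multigraph} [Fintype G.E]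
open Classical

section Deg
variable (hdeg : ∀ x, 3 ≤ G.deg x) (hconn : G.Connected)
include hdeg hconn

lemma exists_uniform {c : G.V → Bool} (hc : ∀ e : G.E, c (G.tail e) ≠ c (G.head e))
    (e0 : G.E) :
    ∃ m0 : ℕ, ∀ e f : G.E, c (G.tail e) = c (G.tail f) → 0 < G.qn (2 * m0) e f := by
  obtain ⟨b, hb, hb2⟩ := exists_plus_two hdeg hconn e0
  have hbe : Even b := by
    rw [← qn_parity hdeg hc hb]
  set P : Set ℕ := {n | 0 < G.qn n e0 e0} with hP
  have h0 : 0 ∈ P := by rw [hP]; exact Set.mem_setOf.mpr (by rw [qn_zero]; simp)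
  have hPadd : ∀ a ∈ P, ∀ b ∈ P, a + b ∈ P := fun a ha b hb => qn_pos_trans hdeg ha hb
  have hfill := semigroup_even h0 hPadd hbe hb hb2
  -- reference walks
  set n1 : G.E → ℕ := fun e => (nreach_all hdeg hconn e e0).choose with hn1def
  have hn1 : ∀ e, 0 < G.qn (n1 e) e e0 := fun e => (nreach_all hdeg hconn e e0).choose_spec
  set n2 : G.E → ℕ := fun f => (nreach_all hdeg hconn e0 f).choose with hn2def
  have hn2 : ∀ f, 0 < G.qn (n2 f) e0 f := fun f => (nreach_all hdeg hconn e0 f).choose_spec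
  set M : ℕ := (Finset.univ.sup n1) + (Finset.univ.sup n2) with hM
  refine ⟨M + (b + 2) * (b + 2), ?_⟩
  intro e f hcomp
  have hbound : n1 e + n2 f ≤ M := by
    have h1 : n1 e ≤ Finset.univ.sup n1 := Finset.le_sup (Finset.mem_univ e)
    have h2 : n2 f ≤ Finset.univ.sup n2 := Finset.le_sup (Finset.mem_univ f)
    omega
  set filler : ℕ := 2 * (M + (b + 2) * (b + 2)) - n1 e - n2 f with hfiller
  have hparity : Even (n1 e + n2 f) := by
    have p1 := qn_parity hdeg hc (hn1 e)
    have p2 := qn_parity hdeg hc (hn2 f)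
    rw [Nat.even_add, ← p1, ← p2]
    cases hce : c (G.tail e) <;> cases hcf : c (G.tail f) <;>
      cases hc0 : c (G.tail e0) <;> simp_all
  have hfe : Even filler := by
    obtain ⟨k, hk⟩ := hparity
    have : n1 e + n2 f ≤ 2 * (M + (b+2)*(b+2)) := by omega
    rw [hfiller]
    exact ⟨(M + (b+2)*(b+2)) - k, by omega⟩
  have hfge : (b + 2) * (b + 2) ≤ filler := by
    rw [hfiller]; omega
  have hfP : 0 < G.qn filler e0 e0 := hfill filler hfe hfge
  have htot : n1 e + (filler + n2 f) = 2 * (M + (b + 2) * (b + 2)) := by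
    rw [hfiller]; omega
  have := qn_pos_trans hdeg (hn1 e) (qn_pos_trans hdeg hfP (hn2 f))
  rwa [htot] at this

end Deg
end Multigraph
namespace Multigraph
open Finset Filter
variable {G : Multigraph} [Fintype G.E]
open Classical

private lemma bool_opp {a b x : Bool} (h1 : x ≠ b) (h2 : b ≠ a) : x = a := by
  cases a <;> cases b <;> cases x <;> simp_all

section Deg
variable (hdeg : ∀ x, 3 ≤ G.deg x) (hconn : G.Connected)
include hdeg hconn

lemma doeblin {c : G.V → Bool} (hc : ∀ e : G.E, c (G.tail e) ≠ c (G.head e))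
    (f0 : G.E) :
    ∃ D : ℕ → ℝ, Tendsto D atTop (nhds 0) ∧
      ∀ n : ℕ, ∀ e : G.E,
        (c (G.tail e) = c (G.tail f0) →
          |G.qn (2*n) e f0 - 2 / (Fintype.card G.E : ℝ)| ≤ D n) ∧
        (c (G.tail e) ≠ c (G.tail f0) →
          |G.qn (2*n+1) e f0 - 2 / (Fintype.card G.E : ℝ)| ≤ D n) := by
  set C : Finset G.E := Finset.univ.filter (fun e => c (G.tail e) = c (G.tail f0))
    with hCdef
  have hmemC : ∀ e : G.E, e ∈ C ↔ c (G.tail e) = c (G.tail f0) := by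
    intro e; rw [hCdef, Finset.mem_filter]; simp
  have hf0C : f0 ∈ C := (hmemC f0).mpr rfl
  have hCne : C.Nonempty := ⟨f0, hf0C⟩
  have hzero : ∀ (k : ℕ) (e g : G.E), c (G.tail g) ≠ c (G.tail e) →
      G.qn (2*k) e g = 0 := by
    intro k e g hne
    by_contra hn0
    have hpos : 0 < G.qn (2*k) e g :=
      lt_of_le_of_ne (qn_nonneg hdeg _ e g) (Ne.symm hn0)
    exact hne ((qn_parity hdeg hc hpos).mpr ⟨k, by ring⟩)
  have hrowC : ∀ (k : ℕ), ∀ e ∈ C, ∑ g ∈ C, G.qn (2*k) e g = 1 := by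
    intro k e he
    have hsplit := Finset.sum_add_sum_compl C (fun g => G.qn (2*k) e g)
    have hz : ∑ g ∈ Cᶜ, G.qn (2*k) e g = 0 := by
      refine Finset.sum_eq_zero (fun g hg => ?_)
      have hgC := Finset.mem_compl.mp hg
      refine hzero k e g (fun hcon => hgC ((hmemC g).mpr ?_))
      rw [hcon, (hmemC e).mp he]
    rw [hz, add_zero] at hsplit
    rw [hsplit, qn_rowsum hdeg]
  have hcolC : ∀ (k : ℕ), ∑ e ∈ C, G.qn (2*k) e f0 = 1 := by
    intro k
    have hsplit := Finset.sum_add_sum_compl C (fun e => G.qn (2*k) e f0)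
    have hz : ∑ e ∈ Cᶜ, G.qn (2*k) e f0 = 0 := by
      refine Finset.sum_eq_zero (fun e he => ?_)
      have heC := Finset.mem_compl.mp he
      exact hzero k e f0 (fun hcon => heC ((hmemC e).mpr hcon.symm))
    rw [hz, add_zero] at hsplit
    rw [hsplit, qn_colsum hdeg]
  set X : ℕ → G.E → ℝ := fun n e => G.qn (2*n) e f0 with hXdef
  set Mx : ℕ → ℝ := fun n => C.sup' hCne (X n) with hMxdef
  set mi : ℕ → ℝ := fun n => C.inf' hCne (X n) with hmidef
  have hrec : ∀ (k n : ℕ), ∀ e ∈ C, X (k + n) e = ∑ g ∈ C, G.qn (2*k) e g * X n g := by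
    intro k n e he
    have h1 : X (k + n) e = G.qn (2*k + 2*n) e f0 := by
      show G.qn (2*(k+n)) e f0 = G.qn (2*k + 2*n) e f0
      congr 1; ring
    rw [h1, qn_chapman hdeg]
    have hsplit := Finset.sum_add_sum_compl C (fun g => G.qn (2*k) e g * G.qn (2*n) g f0)
    have hz : ∑ g ∈ Cᶜ, G.qn (2*k) e g * G.qn (2*n) g f0 = 0 := by
      refine Finset.sum_eq_zero (fun g hg => ?_)
      have hgC := Finset.mem_compl.mp hg
      have : G.qn (2*k) e g = 0 := by
        refine hzero k e g (fun hcon => hgC ((hmemC g).mpr ?_))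
        rw [hcon, (hmemC e).mp he]
      rw [this, zero_mul]
    rw [← hsplit, hz, add_zero]
  have hXle : ∀ n, ∀ g ∈ C, X n g ≤ Mx n := fun n g hg => Finset.le_sup' (X n) hg
  have hXge : ∀ n, ∀ g ∈ C, mi n ≤ X n g := fun n g hg => Finset.inf'_le (X n) hg
  have hmile : ∀ n, mi n ≤ Mx n := fun n => le_trans (hXge n f0 hf0C) (hXle n f0 hf0C)
  have hKnn : ∀ (k : ℕ) (e g : G.E), 0 ≤ G.qn (2*k) e g := fun k e g => qn_nonneg hdeg _ e g
  have hkey : ∀ (k n : ℕ) (εk : ℝ), 0 ≤ εk →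
      (∀ e ∈ C, ∀ g ∈ C, εk ≤ G.qn (2*k) e g) →
      (Mx (k + n) ≤ Mx n - εk * (Mx n - mi n)) ∧
      (mi n + εk * (Mx n - mi n) ≤ mi (k + n)) := by
    intro k n εk hεnn hεle
    obtain ⟨g₀, hg₀C, hg₀⟩ := Finset.exists_mem_eq_inf' hCne (X n)
    obtain ⟨g₁, hg₁C, hg₁⟩ := Finset.exists_mem_eq_sup' hCne (X n)
    have hg₀' : mi n = X n g₀ := hg₀
    have hg₁' : Mx n = X n g₁ := hg₁
    have hd : 0 ≤ Mx n - mi n := by have := hmile n; linarith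
    constructor
    · refine Finset.sup'_le hCne _ (fun e he => ?_)
      have hsum : ∑ g ∈ C.erase g₀, G.qn (2*k) e g + G.qn (2*k) e g₀ = 1 := by
        rw [Finset.sum_erase_add C _ hg₀C, hrowC k e he]
      have hb1 : ∑ g ∈ C.erase g₀, G.qn (2*k) e g * X n g
          ≤ (∑ g ∈ C.erase g₀, G.qn (2*k) e g) * Mx n := by
        rw [Finset.sum_mul]
        refine Finset.sum_le_sum (fun g hg => ?_)
        exact mul_le_mul_of_nonneg_left (hXle n g (Finset.mem_of_mem_erase hg)) (hKnn k e g)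
      have hexp : X (k + n) e
          = ∑ g ∈ C.erase g₀, G.qn (2*k) e g * X n g + G.qn (2*k) e g₀ * X n g₀ := by
        rw [hrec k n e he, Finset.sum_erase_add C _ hg₀C]
      have hKe : εk ≤ G.qn (2*k) e g₀ := hεle e he g₀ hg₀C
      have hKd : εk * (Mx n - mi n) ≤ G.qn (2*k) e g₀ * (Mx n - mi n) :=
        mul_le_mul_of_nonneg_right hKe hd
      have hS : ∑ g ∈ C.erase g₀, G.qn (2*k) e g = 1 - G.qn (2*k) e g₀ := by linarith
      calc X (k + n) e
          = ∑ g ∈ C.erase g₀, G.qn (2*k) e g * X n g + G.qn (2*k) e g₀ * X n g₀ := hexp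
        _ ≤ (1 - G.qn (2*k) e g₀) * Mx n + G.qn (2*k) e g₀ * X n g₀ := by
            rw [← hS]; linarith [hb1]
        _ = (1 - G.qn (2*k) e g₀) * Mx n + G.qn (2*k) e g₀ * mi n := by rw [← hg₀']
        _ = Mx n - G.qn (2*k) e g₀ * (Mx n - mi n) := by ring
        _ ≤ Mx n - εk * (Mx n - mi n) := by linarith [hKd]
    · refine Finset.le_inf' hCne _ (fun e he => ?_)
      have hsum : ∑ g ∈ C.erase g₁, G.qn (2*k) e g + G.qn (2*k) e g₁ = 1 := by
        rw [Finset.sum_erase_add C _ hg₁C, hrowC k e he]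
      have hb1 : (∑ g ∈ C.erase g₁, G.qn (2*k) e g) * mi n
          ≤ ∑ g ∈ C.erase g₁, G.qn (2*k) e g * X n g := by
        rw [Finset.sum_mul]
        refine Finset.sum_le_sum (fun g hg => ?_)
        exact mul_le_mul_of_nonneg_left (hXge n g (Finset.mem_of_mem_erase hg)) (hKnn k e g)
      have hexp : X (k + n) e
          = ∑ g ∈ C.erase g₁, G.qn (2*k) e g * X n g + G.qn (2*k) e g₁ * X n g₁ := by
        rw [hrec k n e he, Finset.sum_erase_add C _ hg₁C]
      have hKe : εk ≤ G.qn (2*k) e g₁ := hεle e he g₁ hg₁C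
      have hKd : εk * (Mx n - mi n) ≤ G.qn (2*k) e g₁ * (Mx n - mi n) :=
        mul_le_mul_of_nonneg_right hKe hd
      have hS : ∑ g ∈ C.erase g₁, G.qn (2*k) e g = 1 - G.qn (2*k) e g₁ := by linarith
      calc mi n + εk * (Mx n - mi n)
          ≤ mi n + G.qn (2*k) e g₁ * (Mx n - mi n) := by linarith [hKd]
        _ = (1 - G.qn (2*k) e g₁) * mi n + G.qn (2*k) e g₁ * Mx n := by ring
        _ = (1 - G.qn (2*k) e g₁) * mi n + G.qn (2*k) e g₁ * X n g₁ := by rw [← hg₁']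
        _ ≤ ∑ g ∈ C.erase g₁, G.qn (2*k) e g * X n g + G.qn (2*k) e g₁ * X n g₁ := by
            rw [← hS]; linarith [hb1]
        _ = X (k + n) e := hexp.symm
  have hstep : ∀ n, Mx (n+1) ≤ Mx n ∧ mi n ≤ mi (n+1) := by
    intro n
    have h := hkey 1 n 0 le_rfl (fun e _ g _ => hKnn 1 e g)
    rw [show 1 + n = n + 1 by ring] at h
    exact ⟨by linarith [h.1], by linarith [h.2]⟩
  obtain ⟨m0, hm0⟩ := exists_uniform hdeg hconn hc f0
  set ε : ℝ := (C ×ˢ C).inf' (hCne.product hCne) (fun p => G.qn (2*m0) p.1 p.2) with hεdef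
  have hεpos : 0 < ε := by
    obtain ⟨p, hp, hpe⟩ := Finset.exists_mem_eq_inf' (hCne.product hCne)
      (fun p => G.qn (2*m0) p.1 p.2)
    rw [hεdef, hpe]
    have hp1 := (Finset.mem_product.mp hp).1
    have hp2 := (Finset.mem_product.mp hp).2
    exact hm0 p.1 p.2 (by rw [(hmemC _).mp hp1, (hmemC _).mp hp2])
  have hεle : ∀ e ∈ C, ∀ g ∈ C, ε ≤ G.qn (2*m0) e g := by
    intro e he g hg
    have hmem : (e, g) ∈ C ×ˢ C := Finset.mem_product.mpr ⟨he, hg⟩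
    exact Finset.inf'_le (fun p => G.qn (2*m0) p.1 p.2) hmem
  have hcontr : ∀ n, Mx (m0 + n) - mi (m0 + n) ≤ (1 - 2*ε) * (Mx n - mi n) := by
    intro n
    have h := hkey m0 n ε (le_of_lt hεpos) hεle
    have hx : (1 - 2*ε) * (Mx n - mi n)
        = Mx n - mi n - 2*(ε*(Mx n - mi n)) := by ring
    rw [hx]
    linarith [h.1, h.2]
  set D : ℕ → ℝ := fun n => Mx n - mi n with hDdef
  have hD0 : ∀ n, 0 ≤ D n := fun n => sub_nonneg.mpr (hmile n)
  have hDanti : Antitone D := by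
    refine antitone_nat_of_succ_le (fun n => ?_)
    have h := hstep n
    show Mx (n+1) - mi (n+1) ≤ Mx n - mi n
    linarith [h.1, h.2]
  have hbdd : BddBelow (Set.range D) := ⟨0, by rintro x ⟨n, rfl⟩; exact hD0 n⟩
  have htendD : Tendsto D atTop (nhds (⨅ n, D n)) := tendsto_atTop_ciInf hDanti hbdd
  have hL0 : 0 ≤ ⨅ n, D n := le_ciInf hD0
  have hLfinal : (⨅ n, D n) = 0 := by
    have hshift : Tendsto (fun n => D (m0 + n)) atTop (nhds (⨅ n, D n)) := by
      have := htendD.comp (tendsto_add_atTop_nat m0)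
      simpa [Function.comp_def, add_comm] using this
    have hmul : Tendsto (fun n => (1 - 2*ε) * D n) atTop (nhds ((1 - 2*ε) * ⨅ n, D n)) :=
      htendD.const_mul _
    have hle : (⨅ n, D n) ≤ (1 - 2*ε) * ⨅ n, D n :=
      le_of_tendsto_of_tendsto' hshift hmul (fun n => hcontr n)
    nlinarith [hεpos, hL0, hle]
  rw [hLfinal] at htendD
  have hcardC : 2 * C.card = Fintype.card G.E := by
    have hcompl : Cᶜ = C.image G.bar := by
      ext e
      simp only [Finset.mem_compl, Finset.mem_image]
      constructor
      · intro he
        have he' : c (G.tail e) ≠ c (G.tail f0) := fun hcon => he ((hmemC e).mpr hcon)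
        refine ⟨G.bar e, (hmemC _).mpr ?_, G.bar_bar e⟩
        have h1 : c (G.tail (G.bar e)) ≠ c (G.tail e) := by
          rw [tail_bar]; exact (hc e).symm
        exact bool_opp h1 he'
      · rintro ⟨g, hg, rfl⟩ hmem
        have h1 : c (G.tail (G.bar g)) ≠ c (G.tail g) := by
          rw [tail_bar]; exact (hc g).symm
        have h2 := (hmemC g).mp hg
        have h3 := (hmemC (G.bar g)).mp hmem
        rw [h2, h3] at h1
        exact h1 rfl
    have hcc : Cᶜ.card = C.card := by
      rw [hcompl]
      exact Finset.card_image_of_injective _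
        (fun a b hab => by rw [← G.bar_bar a, hab, G.bar_bar])
    have hsum := Finset.card_add_card_compl C
    rw [hcc] at hsum
    omega
  have hcardpos : 0 < C.card := Finset.card_pos.mpr hCne
  set t : ℝ := 2 / (Fintype.card G.E : ℝ) with htdef
  have ht : t = 1 / (C.card : ℝ) := by
    rw [htdef, ← hcardC]
    push_cast
    rw [div_eq_div_iff]
    · ring
    · have : (0:ℝ) < (C.card : ℝ) := by exact_mod_cast hcardpos
      linarith
    · have : (0:ℝ) < (C.card : ℝ) := by exact_mod_cast hcardpos
      positivity
  have htmem : ∀ n, mi n ≤ t ∧ t ≤ Mx n := by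
    intro n
    have hcR : (0:ℝ) < (C.card : ℝ) := by exact_mod_cast hcardpos
    have hlow : (C.card : ℝ) * mi n ≤ 1 := by
      have h := Finset.sum_le_sum (fun e he => hXge n e he)
      rw [Finset.sum_const, nsmul_eq_mul] at h
      calc (C.card : ℝ) * mi n ≤ ∑ e ∈ C, X n e := h
        _ = 1 := hcolC n
    have hhigh : 1 ≤ (C.card : ℝ) * Mx n := by
      have h := Finset.sum_le_sum (fun e he => hXle n e he)
      rw [Finset.sum_const, nsmul_eq_mul] at h
      calc (1:ℝ) = ∑ e ∈ C, X n e := (hcolC n).symm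
        _ ≤ (C.card : ℝ) * Mx n := h
    rw [ht]
    constructor
    · rw [le_div_iff₀ hcR]; linarith
    · rw [div_le_iff₀ hcR]; linarith
  refine ⟨D, htendD, fun n e => ⟨?_, ?_⟩⟩
  · intro hcomp
    have heC : e ∈ C := (hmemC e).mpr hcomp
    have h1 : mi n ≤ G.qn (2*n) e f0 := hXge n e heC
    have h2 : G.qn (2*n) e f0 ≤ Mx n := hXle n e heC
    have h3 := htmem n
    have hDn : D n = Mx n - mi n := rfl
    rw [abs_le]
    constructor <;> [linarith [h3.2]; linarith [h3.1]]
  · intro hincomp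
    have hrec1 : G.qn (2*n+1) e f0 = ∑ g, G.q e g * X n g := by
      rw [qn_succ_left hdeg]
    have hsplit : G.qn (2*n+1) e f0 - t = ∑ g, G.q e g * (X n g - t) := by
      rw [hrec1]
      have hq1 : ∑ g, G.q e g * t = t := by
        rw [← Finset.sum_mul, q_rowsum hdeg, one_mul]
      rw [Finset.sum_congr rfl (fun g (_ : g ∈ Finset.univ) => mul_sub (G.q e g) (X n g) t),
        Finset.sum_sub_distrib, hq1]
    rw [hsplit]
    calc |∑ g, G.q e g * (X n g - t)| ≤ ∑ g, |G.q e g * (X n g - t)| :=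
          Finset.abs_sum_le_sum_abs _ _
      _ ≤ ∑ g, G.q e g * D n := by
          refine Finset.sum_le_sum (fun g _ => ?_)
          rw [abs_mul, abs_of_nonneg (q_nonneg hdeg e g)]
          rcases eq_or_lt_of_le (q_nonneg hdeg e g) with hq | hq
          · rw [← hq, zero_mul, zero_mul]
          · refine mul_le_mul_of_nonneg_left ?_ (le_of_lt hq)
            have hstepg := step_of_q_pos hq
            have hgC : g ∈ C := by
              refine (hmemC g).mpr ?_
              have h1 : c (G.tail g) ≠ c (G.tail e) := by
                rw [hstepg.1]; exact (hc e).symm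
              exact bool_opp h1 hincomp
            have ha : mi n ≤ X n g := hXge n g hgC
            have hb : X n g ≤ Mx n := hXle n g hgC
            have h3 := htmem n
            have hDn : D n = Mx n - mi n := rfl
            rw [abs_le]
            constructor <;> [linarith [h3.2]; linarith [h3.1]]
      _ = D n := by rw [← Finset.sum_mul, q_rowsum hdeg, one_mul]

end Deg
end Multigraph
namespace Multigraph
open Finset Filter
variable {G : Multigraph} [Fintype G.E]
open Classical

private lemma bool_eq_of_ne_of_ne_of_eq {a b u v : Bool}
    (hu : u ≠ a) (hv : v ≠ b) (hab : a = b) : u = v := by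
  revert a b u v; decide

private lemma bool_ne_of_ne_of_ne_of_ne {a b u v : Bool}
    (hu : u ≠ a) (hv : v ≠ b) (hab : a ≠ b) : u ≠ v := by
  revert a b u v; decide

section Deg
variable (hdeg : ∀ x, 3 ≤ G.deg x) (hconn : G.Connected)
include hdeg hconn

lemma tendsto_qn {c : G.V → Bool} (hc : ∀ e : G.E, c (G.tail e) ≠ c (G.head e))
    (e f0 : G.E) (δ : ℕ)
    (hmatch : (c (G.tail e) = c (G.tail f0) ∧ δ = 0) ∨
      (c (G.tail e) ≠ c (G.tail f0) ∧ δ = 1)) :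
    Tendsto (fun n => G.qn (2*n + δ) e f0) atTop
      (nhds (2 / (Fintype.card G.E : ℝ))) := by
  obtain ⟨D, hD, hb⟩ := doeblin hdeg hconn hc f0
  have hbound : ∀ n, |G.qn (2*n + δ) e f0 - 2 / (Fintype.card G.E : ℝ)| ≤ D n := by
    intro n
    rcases hmatch with ⟨hcomp, rfl⟩ | ⟨hincomp, rfl⟩
    · simpa using (hb n e).1 hcomp
    · exact (hb n e).2 hincomp
  rw [← tendsto_sub_nhds_zero_iff]
  exact squeeze_zero_norm (fun n => by rw [Real.norm_eq_abs]; exact hbound n) hD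

end Deg

lemma walklen_snoc {n : ℕ} {x z y : G.V} (h : G.WalkLen n x z) (ha : G.Adj z y) :
    G.WalkLen (n+1) x y := by
  induction n generalizing x with
  | zero => exact ⟨y, h ▸ ha, rfl⟩
  | succ n ih =>
      obtain ⟨w, hxw, hwz⟩ := h
      exact ⟨w, hxw, ih hwz⟩

lemma walklen_nonempty (hconn : G.Connected) (x y : G.V) :
    {n | G.WalkLen n x y}.Nonempty := by
  have h := hconn x y
  induction h with
  | refl => exact ⟨0, rfl⟩
  | tail hxz ha ih =>
      obtain ⟨n, hn⟩ := ih
      exact ⟨n + 1, walklen_snoc hn ha⟩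

lemma walklen_parity {c : G.V → Bool} (hc : ∀ e : G.E, c (G.tail e) ≠ c (G.head e))
    {n : ℕ} {x y : G.V} (h : G.WalkLen n x y) : (c x = c y) ↔ Even n := by
  induction n generalizing x with
  | zero => rw [h]; simp
  | succ n ih =>
      obtain ⟨z, ⟨e, he1, he2⟩, hw⟩ := h
      have hxz : c x ≠ c z := by rw [← he1, ← he2]; exact hc e
      have IH := ih hw
      have key : (c x = c y) ↔ ¬ (c z = c y) := by
        cases hcx : c x <;> cases hcy : c y <;> cases hcz : c z <;> simp_all
      rw [key, IH, Nat.even_add_one]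

lemma head_filter_card (x : G.V) :
    (Finset.univ.filter (fun e => G.head e = x)).card = G.deg x := by
  have himg : Finset.univ.filter (fun e => G.head e = x)
      = (Finset.univ.filter (fun e => G.tail e = x)).image G.bar := by
    ext e
    simp only [Finset.mem_filter, Finset.mem_image, Finset.mem_univ, true_and]
    constructor
    · intro he
      exact ⟨G.bar e, by rw [tail_bar, he], G.bar_bar e⟩
    · rintro ⟨g, hg, rfl⟩
      rw [G.head_bar, hg]
  rw [himg, Finset.card_image_of_injective _
    (fun a b hab => by rw [← G.bar_bar a, hab, G.bar_bar]), deg_eq]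

lemma qv_eq (n : ℕ) (x y : G.V) :
    G.qv n x y = (1 / (G.deg x : ℝ)) *
      ∑ e ∈ Finset.univ.filter (fun e => G.head e = x),
        ∑ f ∈ Finset.univ.filter (fun f => G.head f = y), G.qn n e f := by
  rw [qv]
  congr 1
  haveI : Fintype {e : G.E // G.head e = x} := Fintype.ofFinite _
  haveI : Fintype {f : G.E // G.head f = y} := Fintype.ofFinite _
  rw [tsum_fintype]
  have hinner : ∀ e : {e : G.E // G.head e = x},
      ∑' (f : {f : G.E // G.head f = y}), G.qn n e.1 f.1
        = ∑ f ∈ Finset.univ.filter (fun f => G.head f = y), G.qn n e.1 f := by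
    intro e
    rw [tsum_fintype]
    exact (Finset.sum_subtype _ (fun f => by simp) (fun f => G.qn n e.1 f)).symm
  rw [Finset.sum_congr rfl (fun e _ => hinner e)]
  exact (Finset.sum_subtype _ (fun e => by simp)
    (fun e => ∑ f ∈ Finset.univ.filter (fun f => G.head f = y), G.qn n e f)).symm

end Multigraph

/-- For a finite connected bipartite multigraph with all degrees
`≥ 3`, and `δ ∈ {0,1}` the parity of `d(x,y)`,
`q^(2n+δ)(x,y) → 2 deg(y)/|E(X)|`. -/
theorem nbrw_limit_bipartite (G : Multigraph) [Fintype G.V] [Fintype G.E]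
    (hconn : G.Connected) (hdeg : ∀ x, 3 ≤ G.deg x) (hbip : G.Bipartite) :
    ∀ x y : G.V, ∀ δ : ℕ, δ = G.dist x y % 2 →
      Filter.Tendsto (fun n : ℕ => G.qv (2 * n + δ) x y) Filter.atTop
        (nhds (2 * (G.deg y : ℝ) / (Fintype.card G.E : ℝ))) := by
  classical
  obtain ⟨c, hc⟩ := hbip
  intro x y δ hδ
  have hwl : G.WalkLen (G.dist x y) x y :=
    Nat.sInf_mem (Multigraph.walklen_nonempty hconn x y)
  have hpar : (c x = c y) ↔ Even (G.dist x y) := Multigraph.walklen_parity hc hwl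
  set Ex := Finset.univ.filter (fun e => G.head e = x) with hEx
  set Ey := Finset.univ.filter (fun f => G.head f = y) with hEy
  have hqv : ∀ n, G.qv n x y = (1 / (G.deg x : ℝ)) * ∑ e ∈ Ex, ∑ f ∈ Ey, G.qn n e f :=
    fun n => Multigraph.qv_eq n x y
  have hpair : ∀ e ∈ Ex, ∀ f ∈ Ey,
      Filter.Tendsto (fun n => G.qn (2*n + δ) e f) Filter.atTop
        (nhds (2 / (Fintype.card G.E : ℝ))) := by
    intro e he f hf
    have hex : G.head e = x := by
      rw [hEx] at he; exact (Finset.mem_filter.mp he).2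
    have hfy : G.head f = y := by
      rw [hEy] at hf; exact (Finset.mem_filter.mp hf).2
    have hce : c (G.tail e) ≠ c x := by rw [← hex]; exact hc e
    have hcf : c (G.tail f) ≠ c y := by rw [← hfy]; exact hc f
    refine Multigraph.tendsto_qn hdeg hconn hc e f δ ?_
    rcases Nat.even_or_odd (G.dist x y) with hev | hod
    · left
      have hδ0 : δ = 0 := by rw [hδ, Nat.even_iff.mp hev]
      exact ⟨Multigraph.bool_eq_of_ne_of_ne_of_eq hce hcf (hpar.mpr hev), hδ0⟩
    · right
      have hδ1 : δ = 1 := by rw [hδ, Nat.odd_iff.mp hod]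
      have hxy : c x ≠ c y := fun h => (Nat.not_even_iff_odd.mpr hod) (hpar.mp h)
      exact ⟨Multigraph.bool_ne_of_ne_of_ne_of_ne hce hcf hxy, hδ1⟩
  have hS : Filter.Tendsto
      (fun n => ∑ e ∈ Ex, ∑ f ∈ Ey, G.qn (2*n + δ) e f) Filter.atTop
      (nhds (∑ _e ∈ Ex, ∑ _f ∈ Ey, (2 / (Fintype.card G.E : ℝ)))) :=
    tendsto_finset_sum _ (fun e he => tendsto_finset_sum _ (fun f hf => hpair e he f hf))
  have hmul := hS.const_mul (1 / (G.deg x : ℝ))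
  have hdx : (0:ℝ) < (G.deg x : ℝ) := by
    have := hdeg x
    have : (3:ℝ) ≤ (G.deg x : ℝ) := by exact_mod_cast this
    linarith
  have hcE : (0:ℝ) < (Fintype.card G.E : ℝ) := by
    have h1 : Ex.card = G.deg x := by rw [hEx]; exact Multigraph.head_filter_card x
    have h2 : Ex.card ≤ Fintype.card G.E := by
      rw [← Finset.card_univ]; exact Finset.card_le_univ Ex
    have := hdeg x
    have : 0 < Fintype.card G.E := by omega
    exact_mod_cast this
  have hval : (1 / (G.deg x : ℝ)) * ∑ _e ∈ Ex, ∑ _f ∈ Ey, (2 / (Fintype.card G.E : ℝ))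
      = 2 * (G.deg y : ℝ) / (Fintype.card G.E : ℝ) := by
    rw [Finset.sum_const, Finset.sum_const, nsmul_eq_mul, nsmul_eq_mul,
      show Ex.card = G.deg x from by rw [hEx]; exact Multigraph.head_filter_card x,
      show Ey.card = G.deg y from by rw [hEy]; exact Multigraph.head_filter_card y]
    field_simp
  rw [hval] at hmul
  exact hmul.congr (fun n => (hqv (2*n + δ)).symm)
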